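/- Let X be a compact metric space, A a closed subalgebra of C(X) containing the constants, R the equivalence relation defined by A, and π : X → X/R the quotient map. Then for every closed set F ⊆ X, the saturation r(F) = ⋃_{x∈F} r(x) is closed in X; consequently π is a closed map. -/

import Mathlib

open scoped BigOperators

universe u

variable {X : Type u}

def sepSetoid [TopologicalSpace X] (A : Subalgebra ℝ C(X, ℝ)) : Setoid X :=
  ⟨fun a b => ∀ f ∈ A, f a = f b,
   ⟨fun _ _ _ => rfl, fun h f hf => (h f hf).symm, fun h1 h2 f hf => (h1 f hf).trans (h2 f hf)⟩⟩

def algRel [TopologicalSpace X] (A : Subalgebra ℝ C(X, ℝ)) (a b : X) : Prop :=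
  ∀ f ∈ A, f a = f b

def IsBoltFrom (R S : X → X → Prop) {n : ℕ} (x : Fin n → X) : Prop :=
  ∀ i : ℕ, ∀ h : i + 1 < n,
    x ⟨i, by omega⟩ ≠ x ⟨i + 1, h⟩ ∧
    (if i % 2 = 0 then R else S) (x ⟨i, by omega⟩) (x ⟨i + 1, h⟩)

def IsBolt (R S : X → X → Prop) {n : ℕ} (x : Fin n → X) : Prop :=
  IsBoltFrom R S x ∨ IsBoltFrom S R x

def IsClosedBolt (R S : X → X → Prop) {n : ℕ} (x : Fin n → X) : Prop :=
  ∃ hn : 0 < n, IsBolt R S (Fin.snoc x (x ⟨0, hn⟩))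

def IsInfBoltFrom (R S : X → X → Prop) (x : ℕ → X) : Prop :=
  ∀ i : ℕ, x i ≠ x (i + 1) ∧ (if i % 2 = 0 then R else S) (x i) (x (i + 1))

def IsInfBolt (R S : X → X → Prop) (x : ℕ → X) : Prop :=
  IsInfBoltFrom R S x ∨ IsInfBoltFrom S R x

def sumSet [TopologicalSpace X] (A₁ A₂ : Subalgebra ℝ C(X, ℝ)) : Set C(X, ℝ) :=
  {u | ∃ v₁ ∈ A₁, ∃ v₂ ∈ A₂, u = v₁ + v₂}

def ExtremalFin [TopologicalSpace X] [CompactSpace X] (w : C(X, ℝ)) {n : ℕ} (x : Fin n → X) : Prop :=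
  (∀ i, w (x i) = (-1 : ℝ) ^ (i : ℕ) * ‖w‖) ∨ (∀ i, w (x i) = (-1 : ℝ) ^ ((i : ℕ) + 1) * ‖w‖)

def ExtremalSeq [TopologicalSpace X] [CompactSpace X] (w : C(X, ℝ)) (x : ℕ → X) : Prop :=
  (∀ i, w (x i) = (-1 : ℝ) ^ i * ‖w‖) ∨ (∀ i, w (x i) = (-1 : ℝ) ^ (i + 1) * ‖w‖)

noncomputable def ssint {α : Type*} [MeasurableSpace α] (μ : MeasureTheory.SignedMeasure α) (g : α → ℝ) : ℝ :=
  (∫ a, g a ∂μ.toJordanDecomposition.posPart) - ∫ a, g a ∂μ.toJordanDecomposition.negPart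

def measSupport {α : Type*} [TopologicalSpace α] [MeasurableSpace α] (m : MeasureTheory.Measure α) : Set α :=
  {x | ∀ U : Set α, IsOpen U → x ∈ U → 0 < m U}

theorem stmt1 [MetricSpace X] [CompactSpace X] (A : Subalgebra ℝ C(X, ℝ))
    (hA : IsClosed (A : Set C(X, ℝ))) :
    (∀ F : Set X, IsClosed F → IsClosed {y : X | ∃ x ∈ F, ∀ f ∈ A, f x = f y}) ∧
    IsClosedMap (Quotient.mk (sepSetoid A)) := by
  have hsat : ∀ F : Set X, IsClosed F → IsClosed {y : X | ∃ x ∈ F, ∀ f ∈ A, f x = f y} := by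
    intro F hF
    have hR : IsClosed {p : X × X | ∀ f ∈ A, f p.1 = f p.2} := by
      have h : {p : X × X | ∀ f ∈ A, f p.1 = f p.2}
          = ⋂ f ∈ (A : Set C(X, ℝ)), {p : X × X | f p.1 = f p.2} := by
        ext p; simp
      rw [h]
      exact isClosed_biInter fun f _ =>
        isClosed_eq (f.continuous.comp continuous_fst) (f.continuous.comp continuous_snd)
    have hK : IsCompact ((F ×ˢ (Set.univ : Set X)) ∩ {p : X × X | ∀ f ∈ A, f p.1 = f p.2}) :=
      ((hF.prod isClosed_univ).inter hR).isCompact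
    have heq : {y : X | ∃ x ∈ F, ∀ f ∈ A, f x = f y}
        = Prod.snd '' ((F ×ˢ (Set.univ : Set X)) ∩ {p : X × X | ∀ f ∈ A, f p.1 = f p.2}) := by
      ext y
      constructor
      · rintro ⟨x, hx, h⟩
        exact ⟨(x, y), ⟨⟨hx, trivial⟩, h⟩, rfl⟩
      · rintro ⟨⟨x, y'⟩, ⟨⟨hx, -⟩, h⟩, rfl⟩
        exact ⟨x, hx, h⟩
    rw [heq]
    exact (hK.image continuous_snd).isClosed
  refine ⟨hsat, ?_⟩
  intro F hF
  rw [← isQuotientMap_quotient_mk'.isClosed_preimage]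
  have : Quotient.mk (sepSetoid A) ⁻¹' (Quotient.mk (sepSetoid A) '' F)
      = {y : X | ∃ x ∈ F, ∀ f ∈ A, f x = f y} := by
    ext y
    simp only [Set.mem_preimage, Set.mem_image, Set.mem_setOf_eq]
    constructor
    · rintro ⟨x, hx, h⟩
      exact ⟨x, hx, Quotient.exact h⟩
    · rintro ⟨x, hx, h⟩
      exact ⟨x, hx, Quotient.sound h⟩
  exact this ▸ hsat F hF
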